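/- The two-focus hyperbola with foci i and 2i and distance-difference log(3/2) coincides with a focus/directrix hyperbola: {z ∈ ℍ : |dist z i − dist z (2i)| = log(3/2)} = {z = x + iy ∈ ℍ : 24 + 6x⁴ − 26y² + 6y⁴ + 3x²(−17 + 4y²) = 0} = {z ∈ ℍ : sinh(dist z i) = (√77/5)·sinh(Metric.infDist z ℓ_{√(11/7)})}. -/

import Mathlib

open UpperHalfPlane Real

/-- The geodesic `ℓ_R = {u ∈ ℍ : |u| = R}` in the upper half-plane. -/
noncomputable def ell (R : ℝ) : Set ℍ := {u : ℍ | ‖(u : ℂ)‖ = R}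

/-- The point `t·i` of the upper half-plane, for `t > 0`. -/
noncomputable def vpt (t : ℝ) (ht : 0 < t) : ℍ :=
  UpperHalfPlane.mk (t * Complex.I) (by simpa using ht)

lemma my_sinh_dist (z w : ℍ) : Real.sinh (dist z w) =
    dist (z : ℂ) w * dist (z : ℂ) ((starRingEnd ℂ) (w : ℂ)) / (2 * z.im * w.im) := by
  have h : dist z w = 2 * (dist z w / 2) := by ring
  rw [h, Real.sinh_two_mul, UpperHalfPlane.sinh_half_dist, UpperHalfPlane.cosh_half_dist]
  have h2 : Real.sqrt (z.im * w.im) ^ 2 = z.im * w.im := Real.sq_sqrt (by positivity)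
  have h3 : Real.sqrt (z.im * w.im) ≠ 0 := by positivity
  field_simp
  ring_nf
  have h4 : Real.sqrt (z.im) ^ 2 = z.im := Real.sq_sqrt z.im_pos.le
  have h5 : Real.sqrt (w.im) ^ 2 = w.im := Real.sq_sqrt w.im_pos.le
  rw [h2]; ring

lemma my_sinh_dist' (z w : ℍ) : Real.sinh (dist z w) =
    Real.sqrt ((z.re - w.re)^2 + (z.im - w.im)^2) *
      Real.sqrt ((z.re - w.re)^2 + (z.im + w.im)^2) / (2 * z.im * w.im) := by
  rw [my_sinh_dist, Complex.dist_eq_re_im, Complex.dist_eq_re_im]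
  simp only [UpperHalfPlane.coe_re, UpperHalfPlane.coe_im, Complex.conj_re, Complex.conj_im]
  ring_nf

lemma mem_ell_iff (R : ℝ) (hR : 0 < R) (u : ℍ) :
    u ∈ ell R ↔ u.re^2 + u.im^2 = R^2 := by
  constructor
  · intro h
    have : ‖(u:ℂ)‖ ^ 2 = R ^ 2 := by rw [show ‖(u:ℂ)‖ = R from h]
    rwa [Complex.sq_norm, Complex.normSq_apply, UpperHalfPlane.coe_re, UpperHalfPlane.coe_im,
      ← pow_two, ← pow_two] at this
  · intro h
    have : ‖(u:ℂ)‖ ^ 2 = R ^ 2 := by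
      rw [Complex.sq_norm, Complex.normSq_apply, UpperHalfPlane.coe_re, UpperHalfPlane.coe_im,
        ← pow_two, ← pow_two, h]
    have h2 := congrArg Real.sqrt this
    rw [Real.sqrt_sq (norm_nonneg _), Real.sqrt_sq hR.le] at h2
    exact h2

lemma sinh_dist_ge (R : ℝ) (hR : 0 < R) (z u : ℍ) (hu : u ∈ ell R) :
    |z.re^2 + z.im^2 - R^2| / (2*R*z.im) ≤ Real.sinh (dist z u) := by
  rw [my_sinh_dist']
  set x := z.re; set y := z.im; set a := u.re; set v := u.im
  have hy : 0 < y := z.im_pos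
  have hv : 0 < v := u.im_pos
  have hav : a^2 + v^2 = R^2 := (mem_ell_iff R hR u).1 hu
  have key : v^2 * (x^2+y^2-R^2)^2 + (2*R^2*x - a*(x^2+y^2+R^2))^2
      = R^2 * (((x-a)^2+(y-v)^2) * ((x-a)^2+(y+v)^2)) := by
    have h : R^2 = a^2 + v^2 := hav.symm
    rw [h]; ring
  -- v * |s - R^2| ≤ R * (√P1 * √P2)
  have h1 : v * |x^2+y^2-R^2| ≤ R * (Real.sqrt ((x-a)^2+(y-v)^2) * Real.sqrt ((x-a)^2+(y+v)^2)) := by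
    have e1 : v * |x^2+y^2-R^2| = Real.sqrt (v^2 * (x^2+y^2-R^2)^2) := by
      rw [show v^2 * (x^2+y^2-R^2)^2 = (v * |x^2+y^2-R^2|)^2 by rw [mul_pow, sq_abs],
        Real.sqrt_sq (by positivity)]
    have e2 : R * (Real.sqrt ((x-a)^2+(y-v)^2) * Real.sqrt ((x-a)^2+(y+v)^2))
        = Real.sqrt (R^2 * (((x-a)^2+(y-v)^2) * ((x-a)^2+(y+v)^2))) := by
      rw [Real.sqrt_mul (by positivity), Real.sqrt_mul (by positivity),
        Real.sqrt_sq hR.le]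
    rw [e1, e2]
    exact Real.sqrt_le_sqrt (by nlinarith [sq_nonneg (2*R^2*x - a*(x^2+y^2+R^2))])
  rw [div_le_div_iff₀ (by positivity) (by positivity)]
  nlinarith [h1, hR, hy, hv, abs_nonneg (x^2+y^2-R^2),
    Real.sqrt_nonneg ((x-a)^2+(y-v)^2), Real.sqrt_nonneg ((x-a)^2+(y+v)^2)]

lemma infDist_ell (R : ℝ) (hR : 0 < R) (z : ℍ) :
    Metric.infDist z (ell R) = Real.arsinh (|z.re^2 + z.im^2 - R^2| / (2*R*z.im)) := by
  set x := z.re with hx; set y := z.im with hy'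
  have hy : 0 < y := z.im_pos
  set s := x^2 + y^2 with hs
  have hden : 0 < s + R^2 := by positivity
  set a0 : ℝ := 2*R^2*x/(s+R^2) with ha0
  have ha0eq : a0 * (s + R^2) = 2*R^2*x := by
    rw [ha0, div_mul_cancel₀ _ hden.ne']
  have hpos : 0 < R^2 - a0^2 := by
    have ht : a0^2 * (s+R^2)^2 = 4*R^4*x^2 := by
      rw [← mul_pow, ha0eq]; ring
    have h1 : (R^2 - a0^2) * (s+R^2)^2 = R^2*((s-R^2)^2 + 4*R^2*y^2) := by
      linear_combination (-1) * ht + (4:ℝ)*R^4*hs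
    have h2 : 0 < (R^2 - a0^2) * (s+R^2)^2 := by
      rw [h1]; positivity
    nlinarith [h2, mul_pos hden hden]
  set v0 : ℝ := Real.sqrt (R^2 - a0^2) with hv0def
  have hv0 : 0 < v0 := Real.sqrt_pos.2 hpos
  have hv0sq : v0^2 = R^2 - a0^2 := Real.sq_sqrt hpos.le
  set u0 : ℍ := UpperHalfPlane.mk ⟨a0, v0⟩ hv0 with hu0
  have hu0re : u0.re = a0 := rfl
  have hu0im : u0.im = v0 := rfl
  have hu0mem : u0 ∈ ell R := (mem_ell_iff R hR u0).2 (by rw [hu0re, hu0im, hv0sq]; ring)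
  have hzero : 2*R^2*x - a0*(s+R^2) = 0 := by rw [ha0eq]; ring
  have hfoot : Real.sinh (dist z u0) = |s - R^2| / (2*R*y) := by
    rw [my_sinh_dist', hu0re, hu0im, ← hx, ← hy']
    have key : v0^2 * (s-R^2)^2
        = R^2 * (((x-a0)^2+(y-v0)^2) * ((x-a0)^2+(y+v0)^2)) := by
      have h : R^2 = a0^2 + v0^2 := by rw [hv0sq]; ring
      have h2 : 2*(a0^2+v0^2)*x - a0*(x^2+y^2+(a0^2+v0^2)) = 0 := by
        rw [← h]; rw [hs] at hzero; linarith [hzero]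
      rw [hs, h]
      linear_combination (-(2*(a0^2+v0^2)*x - a0*(x^2+y^2+(a0^2+v0^2)))) * h2
    have e1 : v0 * |s-R^2| = R * (Real.sqrt ((x-a0)^2+(y-v0)^2) * Real.sqrt ((x-a0)^2+(y+v0)^2)) := by
      have l1 : v0 * |s-R^2| = Real.sqrt (v0^2 * (s-R^2)^2) := by
        rw [show v0^2 * (s-R^2)^2 = (v0 * |s-R^2|)^2 by rw [mul_pow, sq_abs],
          Real.sqrt_sq (by positivity)]
      have l2 : R * (Real.sqrt ((x-a0)^2+(y-v0)^2) * Real.sqrt ((x-a0)^2+(y+v0)^2))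
          = Real.sqrt (R^2 * (((x-a0)^2+(y-v0)^2) * ((x-a0)^2+(y+v0)^2))) := by
        rw [Real.sqrt_mul (by positivity), Real.sqrt_mul (by positivity), Real.sqrt_sq hR.le]
      rw [l1, l2, key]
    rw [div_eq_div_iff (by positivity) (by positivity)]
    linear_combination (-2*y) * e1
  apply le_antisymm
  · have hd0 : dist z u0 = Real.arsinh (|s-R^2|/(2*R*y)) := by
      rw [← hfoot, Real.arsinh_sinh]
    rw [← hd0]
    exact Metric.infDist_le_dist_of_mem hu0mem
  · by_contra hlt
    push_neg at hlt
    obtain ⟨u, hu, hd⟩ := (Metric.infDist_lt_iff ⟨u0, hu0mem⟩).1 hlt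
    have hge := sinh_dist_ge R hR z u hu
    have h2 : Real.arsinh (|s - R^2| / (2*R*y)) ≤ dist z u := by
      calc Real.arsinh (|s - R^2| / (2*R*y))
          ≤ Real.arsinh (Real.sinh (dist z u)) := Real.arsinh_le_arsinh.2 hge
        _ = dist z u := Real.arsinh_sinh _
    linarith

lemma sinh_infDist_ell (R : ℝ) (hR : 0 < R) (z : ℍ) :
    Real.sinh (Metric.infDist z (ell R)) = |z.re^2 + z.im^2 - R^2| / (2*R*z.im) := by
  rw [infDist_ell R hR z, Real.sinh_arsinh]

lemma cosh_eq_iff_abs_eq {t L : ℝ} (hL : 0 ≤ L) : Real.cosh t = Real.cosh L ↔ |t| = L := by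
  constructor
  · intro h
    have h1 := Real.cosh_le_cosh.1 h.le
    have h2 := Real.cosh_le_cosh.1 h.ge
    rw [abs_of_nonneg hL] at h1 h2
    exact le_antisymm h1 h2
  · intro h
    rw [← Real.cosh_abs, h]

lemma cosh_dist_I (z : ℍ) :
    Real.cosh (dist z UpperHalfPlane.I) = (z.re^2 + z.im^2 + 1) / (2 * z.im) := by
  rw [UpperHalfPlane.cosh_dist]
  have h : dist (z : ℂ) (UpperHalfPlane.I : ℂ) ^ 2 = (z.re - 0)^2 + (z.im - 1)^2 := by
    rw [Complex.dist_eq_re_im, Real.sq_sqrt (by positivity)]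
    norm_num [UpperHalfPlane.coe_re, UpperHalfPlane.coe_im, UpperHalfPlane.I]
  rw [h, UpperHalfPlane.I_im]
  have hy : z.im ≠ 0 := z.im_pos.ne'
  field_simp
  ring

lemma vpt2_im : (vpt 2 (by norm_num)).im = 2 := by simp [vpt, UpperHalfPlane.mk_im]

lemma vpt2_re : (vpt 2 (by norm_num)).re = 0 := by simp [vpt, UpperHalfPlane.mk_re]

lemma cosh_dist_2I (z : ℍ) :
    Real.cosh (dist z (vpt 2 (by norm_num))) = (z.re^2 + z.im^2 + 4) / (4 * z.im) := by
  rw [UpperHalfPlane.cosh_dist]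
  have h : dist (z : ℂ) ((vpt 2 (by norm_num) : ℍ) : ℂ) ^ 2 = (z.re - 0)^2 + (z.im - 2)^2 := by
    rw [Complex.dist_eq_re_im, Real.sq_sqrt (by positivity)]
    norm_num [UpperHalfPlane.coe_re, UpperHalfPlane.coe_im, vpt]
  rw [h, vpt2_im]
  have hy : z.im ≠ 0 := z.im_pos.ne'
  field_simp
  ring

lemma cosh_dist_I_2I : Real.cosh (dist UpperHalfPlane.I (vpt 2 (by norm_num))) = 5/4 := by
  rw [cosh_dist_2I, UpperHalfPlane.I_re, UpperHalfPlane.I_im]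
  norm_num

lemma alg_key (x y : ℝ) (hy : 0 < y) :
    ((x^2+y^2+1)/(2*y) * ((x^2+y^2+4)/(4*y)) - 13/12)^2
      - (((x^2+y^2+1)/(2*y))^2 - 1) * (((x^2+y^2+4)/(4*y))^2 - 1)
    = (24 + 6*x^4 - 26*y^2 + 6*y^4 + 3*x^2*(-17 + 4*y^2)) / (144*y^2) := by
  have hy' : y ≠ 0 := hy.ne'
  field_simp
  ring

lemma part1 (z : ℍ) :
    |dist z UpperHalfPlane.I - dist z (vpt 2 (by norm_num))| = Real.log (3 / 2) ↔
      24 + 6 * z.re ^ 4 - 26 * z.im ^ 2 + 6 * z.im ^ 4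
        + 3 * z.re ^ 2 * (-17 + 4 * z.im ^ 2) = 0 := by
  set x := z.re with hx
  set y := z.im with hy'
  have hy : 0 < y := z.im_pos
  set d1 := dist z UpperHalfPlane.I with hd1
  set d2 := dist z (vpt 2 (by norm_num)) with hd2
  have hc1 : Real.cosh d1 = (x^2+y^2+1)/(2*y) := cosh_dist_I z
  have hc2 : Real.cosh d2 = (x^2+y^2+4)/(4*y) := cosh_dist_2I z
  have hs1 : 0 ≤ Real.sinh d1 := Real.sinh_nonneg_iff.2 dist_nonneg
  have hs2 : 0 ≤ Real.sinh d2 := Real.sinh_nonneg_iff.2 dist_nonneg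
  have hL : Real.cosh (Real.log (3/2)) = 13/12 := by
    rw [Real.cosh_log (by norm_num)]; norm_num
  have hlogpos : (0:ℝ) ≤ Real.log (3/2) := Real.log_nonneg (by norm_num)
  have hiff : |d1 - d2| = Real.log (3/2) ↔ Real.cosh (d1 - d2) = 13/12 := by
    rw [← hL, cosh_eq_iff_abs_eq hlogpos]
  rw [hiff]
  have hsub : Real.cosh (d1 - d2) = Real.cosh d1 * Real.cosh d2 - Real.sinh d1 * Real.sinh d2 :=
    Real.cosh_sub d1 d2
  have hkey := alg_key x y hy
  constructor
  · intro h
    have hprod : Real.sinh d1 * Real.sinh d2 = Real.cosh d1 * Real.cosh d2 - 13/12 := by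
      rw [hsub] at h; linarith
    have hsq : (Real.cosh d1 * Real.cosh d2 - 13/12)^2
        = (Real.cosh d1 ^ 2 - 1) * (Real.cosh d2 ^ 2 - 1) := by
      rw [← hprod, mul_pow, Real.sinh_sq, Real.sinh_sq]
    rw [hc1, hc2] at hsq
    have h0 : (24 + 6*x^4 - 26*y^2 + 6*y^4 + 3*x^2*(-17 + 4*y^2)) / (144*y^2) = 0 := by
      rw [← hkey]; linarith [hsq]
    have := (div_eq_zero_iff.1 h0).resolve_right (by positivity)
    linarith [this]
  · intro h
    have h0 : ((x^2+y^2+1)/(2*y) * ((x^2+y^2+4)/(4*y)) - 13/12)^2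
        = (((x^2+y^2+1)/(2*y))^2 - 1) * (((x^2+y^2+4)/(4*y))^2 - 1) := by
      have : (24 + 6*x^4 - 26*y^2 + 6*y^4 + 3*x^2*(-17 + 4*y^2)) / (144*y^2) = 0 := by
        rw [h]; simp
      linarith [hkey, this]
    rw [← hc1, ← hc2] at h0
    have hss : (Real.sinh d1 * Real.sinh d2)^2 = (Real.cosh d1 * Real.cosh d2 - 13/12)^2 := by
      rw [mul_pow, Real.sinh_sq, Real.sinh_sq, h0]
    rcases sq_eq_sq_iff_eq_or_eq_neg.1 hss with hcase | hcase
    · rw [hsub, hcase]; ring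
    · exfalso
      have hadd : Real.cosh (d1 + d2) = 13/12 := by
        rw [Real.cosh_add]
        linarith [hcase]
      have htri : dist UpperHalfPlane.I (vpt 2 (by norm_num)) ≤ d1 + d2 := by
        rw [hd1, hd2, dist_comm z UpperHalfPlane.I]
        exact dist_triangle _ z _
      have hmono : Real.cosh (dist UpperHalfPlane.I (vpt 2 (by norm_num)))
          ≤ Real.cosh (d1 + d2) := by
        rw [Real.cosh_le_cosh]
        rw [abs_of_nonneg dist_nonneg, abs_of_nonneg (by positivity : (0:ℝ) ≤ d1 + d2)]
        exact htri
      rw [cosh_dist_I_2I, hadd] at hmono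
      norm_num at hmono

lemma part2 (z : ℍ) :
    24 + 6 * z.re ^ 4 - 26 * z.im ^ 2 + 6 * z.im ^ 4
        + 3 * z.re ^ 2 * (-17 + 4 * z.im ^ 2) = 0 ↔
      Real.sinh (dist z UpperHalfPlane.I) =
        (Real.sqrt 77 / 5) * Real.sinh (Metric.infDist z (ell (Real.sqrt (11 / 7)))) := by
  set x := z.re with hx
  set y := z.im with hy'
  have hy : 0 < y := z.im_pos
  have h117 : (0:ℝ) < 11/7 := by norm_num
  have hR : 0 < Real.sqrt (11/7) := Real.sqrt_pos.2 h117
  have hR2 : Real.sqrt (11/7) ^ 2 = 11/7 := Real.sq_sqrt h117.le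
  have h77 : Real.sqrt 77 = 7 * Real.sqrt (11/7) := by
    rw [show (77:ℝ) = 7^2 * (11/7) by norm_num, Real.sqrt_mul (by positivity),
      Real.sqrt_sq (by norm_num)]
  rw [sinh_infDist_ell _ hR z, my_sinh_dist' z UpperHalfPlane.I,
    UpperHalfPlane.I_re, UpperHalfPlane.I_im, ← hx, ← hy']
  have hrhs : (Real.sqrt 77 / 5) * (|x^2 + y^2 - Real.sqrt (11/7)^2| / (2*Real.sqrt (11/7)*y))
      = |7*(x^2+y^2) - 11| / (10*y) := by
    rw [hR2, h77, show 7*(x^2+y^2) - 11 = 7*(x^2+y^2-11/7) by ring, abs_mul,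
      abs_of_pos (show (0:ℝ) < 7 by norm_num)]
    field_simp
    ring
  rw [hrhs]
  set P1 : ℝ := (x - 0)^2 + (y - 1)^2 with hP1
  set P2 : ℝ := (x - 0)^2 + (y + 1)^2 with hP2
  have hP1n : 0 ≤ P1 := by positivity
  have hP2n : 0 ≤ P2 := by positivity
  have hsq1 : Real.sqrt P1 ^ 2 = P1 := Real.sq_sqrt hP1n
  have hsq2 : Real.sqrt P2 ^ 2 = P2 := Real.sq_sqrt hP2n
  constructor
  · intro h
    have h5 : 5 * (Real.sqrt P1 * Real.sqrt P2) = |7*(x^2+y^2) - 11| := by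
      have hsq : (5 * (Real.sqrt P1 * Real.sqrt P2))^2 = (|7*(x^2+y^2) - 11|)^2 := by
        rw [sq_abs, mul_pow, mul_pow, hsq1, hsq2, hP1, hP2]
        linear_combination (-4) * h
      have := congrArg Real.sqrt hsq
      rwa [Real.sqrt_sq (by positivity), Real.sqrt_sq (abs_nonneg _)] at this
    rw [div_eq_div_iff (by positivity) (by positivity)]
    linear_combination (2*y) * h5
  · intro h
    rw [div_eq_div_iff (by positivity) (by positivity)] at h
    have hsq : 25 * (P1 * P2) = (7*(x^2+y^2) - 11)^2 := by
      have h2 := congrArg (· ^ 2) h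
      simp only [mul_pow] at h2
      rw [hsq1, hsq2, sq_abs] at h2
      have h3 : (25*(P1*P2)) * (4*y^2) = ((7*(x^2+y^2)-11)^2) * (4*y^2) := by
        linear_combination h2
      exact mul_right_cancel₀ (by positivity) h3
    linear_combination (- (1:ℝ)/4) * hsq

/-- The two-focus hyperbola with foci `i`, `2i` and distance-difference `log(3/2)`
equals the quartic curve `24 + 6x⁴ − 26y² + 6y⁴ + 3x²(−17 + 4y²) = 0`, which in turn
equals the focus/directrix hyperbola with `ε = √77/5` and directrix `ℓ_{√(11/7)}`. -/
theorem stmt18 :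
    {z : ℍ | |dist z UpperHalfPlane.I - dist z (vpt 2 (by norm_num))| = Real.log (3 / 2)} =
      {z : ℍ | 24 + 6 * z.re ^ 4 - 26 * z.im ^ 2 + 6 * z.im ^ 4
        + 3 * z.re ^ 2 * (-17 + 4 * z.im ^ 2) = 0} ∧
    {z : ℍ | 24 + 6 * z.re ^ 4 - 26 * z.im ^ 2 + 6 * z.im ^ 4
        + 3 * z.re ^ 2 * (-17 + 4 * z.im ^ 2) = 0} =
      {z : ℍ | Real.sinh (dist z UpperHalfPlane.I) =
        (Real.sqrt 77 / 5) * Real.sinh (Metric.infDist z (ell (Real.sqrt (11 / 7))))} := by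
  constructor
  · ext z
    simp only [Set.mem_setOf_eq]
    exact part1 z
  · ext z
    simp only [Set.mem_setOf_eq]
    exact part2 z
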